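/- arXiv:1712.00409 — 4 statements merged into one kernel-verified Lean document; each statement's English description precedes it below -/
import Mathlib

section
/- There exists a constant c > 0 such that for every positive integer i, the expected total loss E_i of the counting estimator trained on i iid fair coin flips satisfies E_i ≥ c · i^(−1/2). In other words, the learning curve of the counting model for a fair coin is bounded below by a power law in the training set size with exponent −1/2. -/
open Finset Real

/-- Expected total loss of the counting estimator trained on `i` iid fair coin flips. -/
noncomputable def countingLoss (i : ℕ) : ℝ :=
  2 ^ (-(i : ℝ)) * ∑ k ∈ Finset.range (i + 1), (Nat.choose i k : ℝ) * |(k : ℝ) / i - 1 / 2|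


/-- pointwise telescoping identity -/
lemma key_id (n k : ℕ) (hk1 : 1 ≤ k) (hkn : k ≤ n) :
    (n.choose k : ℝ) * (2 * k - n) =
      (n : ℝ) * ((n-1).choose (k-1)) - (n : ℝ) * ((n-1).choose k) := by
  obtain ⟨m, rfl⟩ : ∃ m, n = m + 1 := ⟨n - 1, by omega⟩
  obtain ⟨j, rfl⟩ : ∃ j, k = j + 1 := ⟨k - 1, by omega⟩
  have h1 : (m + 1) * m.choose j = (m+1).choose (j+1) * (j+1) := Nat.add_one_mul_choose_eq m j
  have h2 : (m + 1) * m.choose (j+1) = (m+1).choose (j+1) * (m - j) := by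
    rcases Nat.lt_or_ge (j+1) (m+1) with h | h
    · have hj : j + 1 ≤ m := by omega
      have hsym : m.choose (j+1) = m.choose (m - (j+1)) := (Nat.choose_symm hj).symm
      rw [hsym]
      have := Nat.add_one_mul_choose_eq m (m - (j+1))
      have e1 : m - (j+1) + 1 = m - j := by omega
      rw [e1] at this
      rw [this]
      have e2 : (m+1).choose (m - j) = (m+1).choose (j+1) := by
        have : (m + 1) - (j + 1) = m - j := by omega
        rw [← this]
        exact Nat.choose_symm (by omega)
      rw [e2]
    · have hj : j = m := by omega
      subst hj
      simp [Nat.choose_succ_self]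
  have hc : (2 * ((j:ℝ)+1) - ((m:ℝ)+1)) = ((j:ℝ)+1) - ((m:ℝ) - j) := by
    have : (j:ℝ) ≤ m := by exact_mod_cast (by omega : j ≤ m)
    ring
  have hmj : ((m - j : ℕ) : ℝ) = (m:ℝ) - j := by
    have : j ≤ m := by omega
    push_cast [this]; ring
  push_cast
  rw [show ((m:ℝ)+1) * (m.choose j) = ((m+1) * m.choose j : ℕ) by push_cast; ring,
      show ((m:ℝ)+1) * (m.choose (j+1)) = ((m+1) * m.choose (j+1) : ℕ) by push_cast; ring,
      h1, h2]
  push_cast [hmj]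
  ring

lemma abs_sum_eq (n : ℕ) (hn : 1 ≤ n) :
    ∑ k ∈ Finset.range (n+1), (n.choose k : ℝ) * |2 * (k:ℝ) - n| =
      2 * n * ((n-1).choose (n/2)) := by
  -- A : positive part sum
  have hA : ∑ k ∈ Finset.range (n+1), (n.choose k : ℝ) * max (2 * (k:ℝ) - n) 0
      = (n : ℝ) * ((n-1).choose (n/2)) := by
    have hsplit : ∑ k ∈ Finset.range (n+1), (n.choose k : ℝ) * max (2 * (k:ℝ) - n) 0
        = ∑ k ∈ Finset.Ico (n/2+1) (n+1), (n.choose k : ℝ) * max (2 * (k:ℝ) - n) 0 := by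
      rw [Finset.range_eq_Ico, ← Finset.sum_Ico_consecutive _ (Nat.zero_le (n/2+1)) (by omega)]
      have hzero : ∑ k ∈ Finset.Ico 0 (n/2+1), (n.choose k : ℝ) * max (2 * (k:ℝ) - n) 0 = 0 := by
        apply Finset.sum_eq_zero
        intro k hk
        simp only [Finset.mem_Ico] at hk
        have hk2 : 2 * k ≤ n := by omega
        have : (2 * (k:ℝ) - n) ≤ 0 := by
          have : ((2*k : ℕ):ℝ) ≤ (n:ℝ) := by exact_mod_cast hk2
          push_cast at this; linarith
        rw [max_eq_right this]; ring
      rw [hzero, zero_add]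
    rw [hsplit]
    have hmax : ∀ k ∈ Finset.Ico (n/2+1) (n+1),
        (n.choose k : ℝ) * max (2 * (k:ℝ) - n) 0 = (n.choose k : ℝ) * (2 * (k:ℝ) - n) := by
      intro k hk
      simp only [Finset.mem_Ico] at hk
      have : n + 1 ≤ 2 * k := by omega
      have hpos : (0:ℝ) ≤ 2 * (k:ℝ) - n := by
        have : ((n+1 : ℕ):ℝ) ≤ ((2*k : ℕ):ℝ) := by exact_mod_cast this
        push_cast at this; linarith
      rw [max_eq_left hpos]
    rw [Finset.sum_congr rfl hmax, Finset.sum_Ico_eq_sum_range]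
    have hlen : (n+1) - (n/2+1) = n - n/2 := by omega
    rw [hlen]
    have hterm : ∀ j ∈ Finset.range (n - n/2),
        (n.choose (n/2+1+j) : ℝ) * (2 * ((n/2+1+j : ℕ):ℝ) - n)
          = (fun j => (n:ℝ) * ((n-1).choose (n/2 + j))) j
            - (fun j => (n:ℝ) * ((n-1).choose (n/2 + j))) (j+1) := by
      intro j hj
      simp only [Finset.mem_range] at hj
      have h := key_id n (n/2+1+j) (by omega) (by omega)
      have e1 : n/2+1+j - 1 = n/2 + j := by omega
      rw [e1] at h
      simp only []
      rw [show n/2 + (j+1) = n/2 + 1 + j by omega]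
      push_cast at h ⊢
      linarith [h]
    rw [Finset.sum_congr rfl hterm, Finset.sum_range_sub']
    have hend : (n-1).choose (n/2 + (n - n/2)) = 0 := by
      apply Nat.choose_eq_zero_of_lt; omega
    simp [hend]
  -- B : negative part sum equals A by reflection
  have hB : ∑ k ∈ Finset.range (n+1), (n.choose k : ℝ) * max ((n:ℝ) - 2 * k) 0
      = ∑ k ∈ Finset.range (n+1), (n.choose k : ℝ) * max (2 * (k:ℝ) - n) 0 := by
    rw [← Finset.sum_range_reflect (fun k => (n.choose k : ℝ) * max ((n:ℝ) - 2 * k) 0) (n+1)]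
    apply Finset.sum_congr rfl
    intro k hk
    simp only [Finset.mem_range] at hk
    have hkn : k ≤ n := by omega
    have e0 : n + 1 - 1 - k = n - k := by omega
    rw [e0]
    have e1 : n.choose (n - k) = n.choose k := Nat.choose_symm hkn
    have e2 : ((n - k : ℕ) : ℝ) = (n:ℝ) - k := by push_cast [hkn]; ring
    rw [e1, e2]
    congr 1
    congr 1
    ring
  have habs : ∀ k ∈ Finset.range (n+1),
      (n.choose k : ℝ) * |2 * (k:ℝ) - n|
        = (n.choose k : ℝ) * max (2 * (k:ℝ) - n) 0 + (n.choose k : ℝ) * max ((n:ℝ) - 2*k) 0 := by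
    intro k _
    rw [← mul_add]
    congr 1
    rcases le_total (2 * (k:ℝ) - n) 0 with h | h
    · rw [abs_of_nonpos h, max_eq_right h, max_eq_left (by linarith)]; ring
    · rw [abs_of_nonneg h, max_eq_left h, max_eq_right (by linarith)]; ring
  calc ∑ k ∈ Finset.range (n+1), (n.choose k : ℝ) * |2 * (k:ℝ) - n|
      = ∑ k ∈ Finset.range (n+1), ((n.choose k : ℝ) * max (2 * (k:ℝ) - n) 0
          + (n.choose k : ℝ) * max ((n:ℝ) - 2*k) 0) := Finset.sum_congr rfl habs
    _ = 2 * n * ((n-1).choose (n/2)) := by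
        rw [Finset.sum_add_distrib, hB, hA]; ring

lemma countingLoss_eq (n : ℕ) (hn : 1 ≤ n) :
    countingLoss n = ((n-1).choose (n/2) : ℝ) / 2 ^ n := by
  have hn0 : (0:ℝ) < n := by exact_mod_cast hn
  unfold countingLoss
  have hpt : ∀ k ∈ Finset.range (n+1),
      (n.choose k : ℝ) * |(k : ℝ) / n - 1 / 2|
        = (1 / (2*n)) * ((n.choose k : ℝ) * |2 * (k:ℝ) - n|) := by
    intro k _
    have : (k : ℝ) / n - 1/2 = (2 * (k:ℝ) - n) / (2*n) := by
      field_simp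
    rw [this, abs_div, abs_of_pos (by linarith : (0:ℝ) < 2*n)]
    field_simp
  rw [Finset.sum_congr rfl hpt, ← Finset.mul_sum, abs_sum_eq n hn]
  have hrpow : (2:ℝ) ^ (-(n:ℝ)) = ((2:ℝ) ^ n)⁻¹ := by
    rw [Real.rpow_neg (by norm_num), Real.rpow_natCast]
  rw [hrpow]
  field_simp

/-- sharp lower bound on the central binomial coefficient -/
lemma central_lb : ∀ m : ℕ, 1 ≤ m → (4:ℝ) ^ m ≤ 2 * Real.sqrt m * (m.centralBinom : ℝ) := by
  intro m hm
  induction m, hm using Nat.le_induction with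
  | base =>
    have : Nat.centralBinom 1 = 2 := by decide
    rw [this]
    norm_num
  | succ m hm ih =>
    have hrec : ((m:ℝ) + 1) * ((m+1).centralBinom : ℝ) = 2 * (2*(m:ℝ) + 1) * (m.centralBinom : ℝ) := by
      exact_mod_cast Nat.succ_mul_centralBinom_succ m
    have hCpos : (0:ℝ) < (m.centralBinom : ℝ) := by
      exact_mod_cast m.centralBinom_pos
    have hm1 : (1:ℝ) ≤ m := by exact_mod_cast hm
    -- key sqrt inequality: 2*(m+1)*√m ≤ (2m+1)*√(m+1)
    have hsq : 2 * ((m:ℝ)+1) * Real.sqrt m ≤ (2*(m:ℝ)+1) * Real.sqrt ((m:ℝ)+1) := by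
      have h1 : 2 * ((m:ℝ)+1) * Real.sqrt m = Real.sqrt ((2*((m:ℝ)+1))^2 * m) := by
        rw [Real.sqrt_mul (by positivity), Real.sqrt_sq (by positivity)]
      have h2 : (2*(m:ℝ)+1) * Real.sqrt ((m:ℝ)+1) = Real.sqrt ((2*(m:ℝ)+1)^2 * ((m:ℝ)+1)) := by
        rw [Real.sqrt_mul (by positivity), Real.sqrt_sq (by positivity)]
      rw [h1, h2]
      apply Real.sqrt_le_sqrt
      nlinarith
    -- multiply goal by (m+1) > 0
    have hmul : (0:ℝ) < (m:ℝ) + 1 := by positivity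
    rw [show ((m+1 : ℕ):ℝ) = (m:ℝ)+1 by push_cast; ring] at *
    have goal' : (4:ℝ)^(m+1) * ((m:ℝ)+1) ≤ 2 * Real.sqrt ((m:ℝ)+1) * ((m+1).centralBinom : ℝ) * ((m:ℝ)+1) := by
      have e : 2 * Real.sqrt ((m:ℝ)+1) * ((m+1).centralBinom : ℝ) * ((m:ℝ)+1)
          = 2 * Real.sqrt ((m:ℝ)+1) * (2 * (2*(m:ℝ) + 1) * (m.centralBinom : ℝ)) := by
        rw [← hrec]; ring
      rw [e]
      have lhs : (4:ℝ)^(m+1) * ((m:ℝ)+1) = 4 * ((m:ℝ)+1) * (4:ℝ)^m := by ring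
      rw [lhs]
      calc 4 * ((m:ℝ)+1) * (4:ℝ)^m ≤ 4 * ((m:ℝ)+1) * (2 * Real.sqrt m * (m.centralBinom : ℝ)) := by
            apply mul_le_mul_of_nonneg_left ih (by positivity)
        _ ≤ 2 * Real.sqrt ((m:ℝ)+1) * (2 * (2*(m:ℝ) + 1) * (m.centralBinom : ℝ)) := by
            have : 4 * ((m:ℝ)+1) * (2 * Real.sqrt m) ≤ 2 * Real.sqrt ((m:ℝ)+1) * (2 * (2*(m:ℝ) + 1)) := by
              nlinarith [hsq]
            nlinarith [hCpos, this]
    exact le_of_mul_le_mul_right goal' hmul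

theorem counting_loss_power_law_lower_bound :
    ∃ c : ℝ, 0 < c ∧ ∀ i : ℕ, 0 < i →
      c * (i : ℝ) ^ (-(1 / 2 : ℝ)) ≤ countingLoss i := by
  refine ⟨1/4, by norm_num, ?_⟩
  intro n hn
  have hn1 : 1 ≤ n := hn
  rw [countingLoss_eq n hn1]
  have hnR : (0:ℝ) < n := by exact_mod_cast hn
  have hrpow : (n:ℝ) ^ (-(1/2 : ℝ)) = (Real.sqrt n)⁻¹ := by
    rw [Real.rpow_neg hnR.le, Real.sqrt_eq_rpow]
  rw [hrpow]
  have hsqrt : (0:ℝ) < Real.sqrt n := Real.sqrt_pos.mpr hnR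
  -- reduce to 2^n ≤ 4 * √n * C(n-1, n/2)
  have key : (2:ℝ) ^ n ≤ 4 * Real.sqrt n * ((n-1).choose (n/2) : ℝ) := by
    rcases Nat.even_or_odd n with ⟨m, hm⟩ | ⟨m, hm⟩
    · -- n = 2m, m ≥ 1
      have hm1 : 1 ≤ m := by omega
      have hdiv : n / 2 = m := by omega
      have hsub : n - 1 = 2*m - 1 := by omega
      have hpascal : Nat.centralBinom m = 2 * (2*m-1).choose m := by
        obtain ⟨a, rfl⟩ : ∃ a, m = a + 1 := ⟨m - 1, by omega⟩
        unfold Nat.centralBinom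
        rw [show 2 * (a+1) = (2*a+1) + 1 by ring]
        rw [Nat.choose_succ_succ, Nat.choose_symm_half]
        rw [show (2*a+1) + 1 - 1 = 2*a+1 by omega]
        have := Nat.choose_symm_half a
        omega
      have hc := central_lb m hm1
      have h4 : (4:ℝ)^m = (2:ℝ)^n := by
        rw [hm]; rw [show m + m = 2*m by ring]
        rw [pow_mul]; norm_num
      have hCB : (m.centralBinom : ℝ) = 2 * ((2*m-1).choose m : ℝ) := by
        exact_mod_cast congrArg (Nat.cast : ℕ → ℝ) hpascal
      rw [h4, hCB] at hc
      have hmono : Real.sqrt m ≤ Real.sqrt n := by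
        apply Real.sqrt_le_sqrt
        have : m ≤ n := by omega
        exact_mod_cast this
      have hCnn : (0:ℝ) ≤ ((2*m-1).choose m : ℝ) := by positivity
      calc (2:ℝ)^n ≤ 2 * Real.sqrt m * (2 * ((2*m-1).choose m : ℝ)) := hc
        _ ≤ 4 * Real.sqrt n * ((2*m-1).choose m : ℝ) := by nlinarith
        _ = 4 * Real.sqrt n * ((n-1).choose (n/2) : ℝ) := by rw [hsub, hdiv]
    · -- n = 2m+1
      have hdiv : n / 2 = m := by omega
      have hsub : n - 1 = 2*m := by omega
      rcases Nat.eq_zero_or_pos m with hm0 | hm1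
      · subst hm0
        have : n = 1 := by omega
        subst this
        norm_num
      · have hc := central_lb m hm1
        have hCB : (m.centralBinom : ℝ) = ((2*m).choose m : ℝ) := by
          unfold Nat.centralBinom; norm_num
        have h2n : (2:ℝ)^n = 2 * (4:ℝ)^m := by
          rw [hm, pow_succ, pow_mul]; norm_num; ring
        have hmono : Real.sqrt m ≤ Real.sqrt n := by
          apply Real.sqrt_le_sqrt
          have : m ≤ n := by omega
          exact_mod_cast this
        have hCnn : (0:ℝ) ≤ ((2*m).choose m : ℝ) := by positivity
        have hs0 : (0:ℝ) ≤ Real.sqrt m := Real.sqrt_nonneg _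
        calc (2:ℝ)^n = 2 * (4:ℝ)^m := h2n
          _ ≤ 2 * (2 * Real.sqrt m * (m.centralBinom : ℝ)) := by nlinarith
          _ = 4 * Real.sqrt m * ((2*m).choose m : ℝ) := by rw [hCB]; ring
          _ ≤ 4 * Real.sqrt n * ((2*m).choose m : ℝ) := by nlinarith
          _ = 4 * Real.sqrt n * ((n-1).choose (n/2) : ℝ) := by rw [hsub, hdiv]
  have h2pos : (0:ℝ) < (2:ℝ)^n := by positivity
  rw [le_div_iff₀ h2pos]
  calc 1/4 * (Real.sqrt n)⁻¹ * 2^n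
      ≤ 1/4 * (Real.sqrt n)⁻¹ * (4 * Real.sqrt n * ((n-1).choose (n/2) : ℝ)) := by
        apply mul_le_mul_of_nonneg_left key (by positivity)
    _ = ((n-1).choose (n/2) : ℝ) := by field_simp
end

section
/- For every even positive integer i, the expected total loss of the counting estimator has the closed form E_i = C(i, i/2) / 2^(i+1), where C(i, i/2) is the central binomial coefficient. -/
open Finset Real

lemma choose_real_succ (n k : ℕ) :
    ((n:ℝ) - k) * n.choose k = (k+1) * n.choose (k+1) := by
  rcases le_or_gt k n with h | h
  · have h1 := Nat.choose_succ_right_eq n k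
    have h2 := congrArg (Nat.cast (R := ℝ)) h1
    push_cast [Nat.cast_sub h] at h2
    linarith
  · simp [Nat.choose_eq_zero_of_lt h, Nat.choose_eq_zero_of_lt (Nat.lt_succ_of_lt h)]

lemma tele (n : ℕ) (r : ℕ) :
    ∑ k ∈ Finset.range (r+1), ((n:ℝ) - 2*k) * n.choose k = (r+1) * n.choose (r+1) := by
  induction r with
  | zero => simp [Nat.choose_one_right]
  | succ r ih =>
    rw [Finset.sum_range_succ, ih]
    have h := choose_real_succ n (r+1)
    push_cast at h ⊢
    linarith

lemma tele' (m : ℕ) (hm : 0 < m) :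
    ∑ k ∈ Finset.range m, (((2*m : ℕ) : ℝ) - 2*k) * ((2*m).choose k : ℝ)
      = (m : ℝ) * ((2*m).choose m : ℝ) := by
  obtain ⟨t, rfl⟩ : ∃ t, m = t + 1 := ⟨m - 1, by omega⟩
  exact_mod_cast tele (2*(t+1)) t

lemma Ulem (m : ℕ) (hm : 0 < m) :
    ∑ k ∈ Finset.range (2*m+1), ((2*m).choose k : ℝ) * |(k:ℝ) - m| = m * (2*m).choose m := by
  set f : ℕ → ℝ := fun k => ((2*m).choose k : ℝ) * |(k:ℝ) - m| with hf
  have hsplit : ∑ k ∈ Finset.range (2*m+1), f k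
      = ∑ k ∈ Finset.Ico 0 (m+1), f k + ∑ k ∈ Finset.Ico (m+1) (2*m+1), f k := by
    rw [Finset.range_eq_Ico,
      ← Finset.sum_Ico_consecutive f (Nat.zero_le (m+1)) (by omega : m+1 ≤ 2*m+1)]
  have hrefl : ∑ k ∈ Finset.Ico (m+1) (2*m+1), f k = ∑ k ∈ Finset.range m, f k := by
    have h := Finset.sum_Ico_reflect f 0 (show m ≤ 2*m + 1 by omega)
    simp only [Nat.sub_zero] at h
    have h2 : (2*m + 1 - m) = m + 1 := by omega
    rw [h2] at h
    rw [← h, ← Finset.range_eq_Ico]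
    apply Finset.sum_congr rfl
    intro j hj
    have hjm : j < m := Finset.mem_range.mp hj
    have hj2 : j ≤ 2*m := by omega
    have hc : (2*m).choose (2*m - j) = (2*m).choose j := Nat.choose_symm hj2
    have hcast : ((2*m - j : ℕ) : ℝ) = 2*(m:ℝ) - j := by
      push_cast [Nat.cast_sub hj2]; ring
    simp only [hf, hc, hcast]
    rw [show 2*(m:ℝ) - j - m = -((j:ℝ) - m) by ring, abs_neg]
  rw [hsplit, hrefl, ← Finset.range_eq_Ico, Finset.sum_range_succ]
  have hfm : f m = 0 := by simp [hf]
  rw [hfm, add_zero]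
  have hdouble : ∑ k ∈ Finset.range m, f k + ∑ k ∈ Finset.range m, f k
      = ∑ k ∈ Finset.range m, (((2*m : ℕ) : ℝ) - 2*k) * ((2*m).choose k : ℝ) := by
    rw [← Finset.sum_add_distrib]
    apply Finset.sum_congr rfl
    intro k hk
    have hk' : k < m := Finset.mem_range.mp hk
    have hk'' : (k:ℝ) ≤ m := by exact_mod_cast hk'.le
    have habs : |(k:ℝ) - m| = (m:ℝ) - k := by
      rw [abs_of_nonpos (by linarith)]; ring
    simp only [hf, habs]
    push_cast
    ring
  rw [hdouble, tele' m hm]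

theorem counting_loss_even_closed_form (i : ℕ) (hi : 0 < i) (heven : Even i) :
    countingLoss i = (Nat.choose i (i / 2) : ℝ) / 2 ^ (i + 1) := by
  obtain ⟨m, rfl⟩ := heven
  rw [show m + m = 2*m from by ring]
  have hm : 0 < m := by omega
  have hmr : (0:ℝ) < m := by exact_mod_cast hm
  have hdiv : (2*m) / 2 = m := by omega
  rw [hdiv, countingLoss]
  have hterm : ∀ k ∈ Finset.range (2*m+1),
      ((2*m).choose k : ℝ) * |(k:ℝ) / (2*m : ℕ) - 1/2|
        = ((2*m).choose k : ℝ) * |(k:ℝ) - m| / (2*(m:ℝ)) := by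
    intro k _
    have h1 : (k:ℝ) / ((2*m : ℕ) : ℝ) - 1/2 = ((k:ℝ) - m) / (2*(m:ℝ)) := by
      push_cast
      field_simp
    rw [h1, abs_div, abs_of_pos (by positivity : (0:ℝ) < 2*(m:ℝ))]
    ring
  rw [Finset.sum_congr rfl hterm, ← Finset.sum_div, Ulem m hm,
    Real.rpow_neg (by norm_num : (0:ℝ) ≤ 2), Real.rpow_natCast]
  field_simp
  ring
end

section
/- For every odd positive integer i, the expected total loss of the counting estimator has the closed form E_i = C(i−1, (i−1)/2) / 2^i, where C(i−1, (i−1)/2) is the central binomial coefficient of i−1. -/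
open Finset Real

lemma counting_sum_eq (m : ℕ) :
    ∑ k ∈ Finset.range (2 * m + 1 + 1),
      (Nat.choose (2 * m + 1) k : ℝ) * |(k : ℝ) / ((2 * m + 1 : ℕ) : ℝ) - 1 / 2|
      = (Nat.choose (2 * m) m : ℝ) := by
  set n := 2 * m + 1 with hn
  have hnR : ((n : ℝ)) = 2 * m + 1 := by push_cast [hn]; ring
  have hnpos : (0 : ℝ) < (n : ℝ) := by rw [hnR]; positivity
  set h : ℕ → ℝ := fun k => (Nat.choose n k : ℝ) * |(k : ℝ) / n - 1 / 2| with hh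
  have hsplit : ∑ k ∈ Finset.range (n + 1), h k
      = (∑ k ∈ Finset.range (m + 1), h k) + ∑ k ∈ Finset.range (m + 1), h (m + 1 + k) := by
    have : n + 1 = (m + 1) + (m + 1) := by omega
    rw [this, Finset.sum_range_add]
  have hrefl : ∀ k ∈ Finset.range (m + 1), h (m + 1 + k) = h (m - k) := by
    intro k hk
    rw [Finset.mem_range] at hk
    have hkm : k ≤ m := by omega
    have hchoose : Nat.choose n (m + 1 + k) = Nat.choose n (m - k) := by
      have : m - k = n - (m + 1 + k) := by omega
      rw [this, Nat.choose_symm (by omega)]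
    have habs : |((m + 1 + k : ℕ) : ℝ) / n - 1 / 2| = |((m - k : ℕ) : ℝ) / n - 1 / 2| := by
      have h1 : ((m + 1 + k : ℕ) : ℝ) / n - 1 / 2 = -(((m - k : ℕ) : ℝ) / n - 1 / 2) := by
        have hc : ((m - k : ℕ) : ℝ) = (m : ℝ) - k := by
          push_cast [hkm]; ring
        field_simp [hc, hnR]
        push_cast
        rw [hc, hnR]; ring
      rw [h1, abs_neg]
    simp only [hh, hchoose, habs]
  have hlow : ∀ k ∈ Finset.range (m + 1),
      h k = (1 / (2 * n)) * (((n : ℝ) - 2 * k) * (Nat.choose n k : ℝ)) := by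
    intro k hk
    rw [Finset.mem_range] at hk
    have hkm : k ≤ m := by omega
    have hkR : (k : ℝ) ≤ m := by exact_mod_cast hkm
    have habs : |(k : ℝ) / n - 1 / 2| = ((n : ℝ) - 2 * k) / (2 * n) := by
      rw [abs_of_nonpos]
      · field_simp
        ring
      · rw [sub_nonpos, div_le_div_iff₀ hnpos (by norm_num : (0:ℝ) < 2)]
        nlinarith [hnR]
    rw [hh]
    simp only [habs]
    field_simp
  set F : ℕ → ℝ := fun j => (j : ℝ) * (Nat.choose n j : ℝ) with hF
  have htel : ∑ k ∈ Finset.range (m + 1), ((n : ℝ) - 2 * k) * (Nat.choose n k : ℝ)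
      = ((m : ℝ) + 1) * (Nat.choose n (m + 1) : ℝ) := by
    have key : ∀ k ∈ Finset.range (m + 1),
        ((n : ℝ) - 2 * k) * (Nat.choose n k : ℝ) = F (k + 1) - F k := by
      intro k hk
      rw [Finset.mem_range] at hk
      have hkn : k ≤ n := by omega
      have := Nat.choose_succ_right_eq n k
      have hcast : (Nat.choose n (k + 1) : ℝ) * (k + 1) = (Nat.choose n k : ℝ) * ((n : ℝ) - k) := by
        have hsub : ((n - k : ℕ) : ℝ) = (n : ℝ) - k := by push_cast [hkn]; ring
        calc (Nat.choose n (k + 1) : ℝ) * (k + 1)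
            = ((Nat.choose n (k + 1) * (k + 1) : ℕ) : ℝ) := by push_cast; ring
          _ = ((Nat.choose n k * (n - k) : ℕ) : ℝ) := by rw [this]
          _ = (Nat.choose n k : ℝ) * ((n : ℝ) - k) := by push_cast [hkn]; ring
      simp only [hF]
      push_cast
      nlinarith [hcast]
    rw [Finset.sum_congr rfl key, Finset.sum_range_sub F]
    simp [hF]
  have hcentral : ((m : ℝ) + 1) * (Nat.choose n (m + 1) : ℝ) = (n : ℝ) * (Nat.choose (2 * m) m : ℝ) := by
    have := Nat.add_one_mul_choose_eq (2 * m) m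
    have hc : ((2 * m).succ * (2 * m).choose m : ℕ) = ((2 * m + 1).choose (m + 1) * (m + 1) : ℕ) := this
    have : ((2 * m + 1 : ℝ)) * (Nat.choose (2 * m) m : ℝ) = (Nat.choose (2 * m + 1) (m + 1) : ℝ) * ((m : ℝ) + 1) := by
      exact_mod_cast congrArg (Nat.cast : ℕ → ℝ) hc
    rw [hnR, hn]
    linarith [this]
  calc ∑ k ∈ Finset.range (n + 1), h k
      = (∑ k ∈ Finset.range (m + 1), h k) + ∑ k ∈ Finset.range (m + 1), h (m + 1 + k) := hsplit
    _ = (∑ k ∈ Finset.range (m + 1), h k) + ∑ k ∈ Finset.range (m + 1), h (m - k) := by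
        rw [Finset.sum_congr rfl hrefl]
    _ = 2 * ∑ k ∈ Finset.range (m + 1), h k := by
        have hr : ∑ k ∈ Finset.range (m + 1), h (m - k) = ∑ k ∈ Finset.range (m + 1), h k := by
          have := Finset.sum_range_reflect h (m + 1)
          simpa using this
        rw [hr]; ring
    _ = 2 * ((1 / (2 * n)) * ∑ k ∈ Finset.range (m + 1), ((n : ℝ) - 2 * k) * (Nat.choose n k : ℝ)) := by
        rw [Finset.sum_congr rfl hlow, ← Finset.mul_sum]
    _ = (Nat.choose (2 * m) m : ℝ) := by
        rw [htel, hcentral]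
        field_simp

theorem counting_loss_odd_closed_form (i : ℕ) (hi : 0 < i) (hodd : Odd i) :
    countingLoss i = (Nat.choose (i - 1) ((i - 1) / 2) : ℝ) / 2 ^ i := by
  obtain ⟨m, rfl⟩ := hodd
  have h1 : 2 * m + 1 - 1 = 2 * m := by omega
  have h2 : (2 * m) / 2 = m := by omega
  rw [countingLoss, counting_sum_eq, h1, h2]
  rw [Real.rpow_neg (by norm_num), Real.rpow_natCast]
  field_simp
end

section
/- For every even positive integer i, the expected total loss of the counting estimator does not change when one more training sample is added: E_i = E_{i+1}. -/
open Finset Real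

private lemma tel (n : ℕ) (hn : 0 < n) :
    ∀ j, j ≤ n - 1 →
      ∑ k ∈ Finset.range (j + 1), (Nat.choose n k : ℝ) * ((n : ℝ) - 2 * k)
        = (n : ℝ) * (Nat.choose (n - 1) j : ℝ) := by
  intro j
  induction j with
  | zero => intro _; simp
  | succ j ih =>
    intro hj
    have hj' : j ≤ n - 1 := by omega
    rw [Finset.sum_range_succ, ih hj']
    have hA : n * Nat.choose (n - 1) j = Nat.choose n (j + 1) * (j + 1) := by
      have := Nat.add_one_mul_choose_eq (n - 1) j
      rwa [Nat.sub_add_cancel hn] at this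
    have hB : Nat.choose (n - 1) (j + 1) * n = Nat.choose n (j + 1) * (n - (j + 1)) := by
      have := Nat.choose_mul_succ_eq (n - 1) (j + 1)
      rwa [Nat.sub_add_cancel hn] at this
    have hle : j + 1 ≤ n := by omega
    have hA' : (n : ℝ) * (Nat.choose (n - 1) j : ℝ)
        = (Nat.choose n (j + 1) : ℝ) * ((j : ℝ) + 1) := by exact_mod_cast congrArg Nat.cast hA
    have hB' : (Nat.choose (n - 1) (j + 1) : ℝ) * (n : ℝ)
        = (Nat.choose n (j + 1) : ℝ) * ((n : ℝ) - ((j : ℝ) + 1)) := by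
      have := congrArg (Nat.cast (R := ℝ)) hB
      push_cast [Nat.cast_sub hle] at this
      convert this using 2
    push_cast
    nlinarith [hA', hB']

private lemma sum_abs (n : ℕ) (hn : 0 < n) :
    ∑ k ∈ Finset.range (n + 1), (Nat.choose n k : ℝ) * |(n : ℝ) - 2 * k|
      = 2 * ((n : ℝ) * (Nat.choose (n - 1) (n / 2) : ℝ)) := by
  have hm2 : 2 * (n / 2) ≤ n := by omega
  set m := n / 2 with hm
  clear_value m
  have hsplit :
      ∑ k ∈ Finset.range (m + 1), (Nat.choose n k : ℝ) * |(n : ℝ) - 2 * k|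
        + ∑ k ∈ Finset.Ico (m + 1) (n + 1), (Nat.choose n k : ℝ) * |(n : ℝ) - 2 * k|
        = ∑ k ∈ Finset.range (n + 1), (Nat.choose n k : ℝ) * |(n : ℝ) - 2 * k| := by
    rw [Finset.range_eq_Ico, Finset.range_eq_Ico]
    exact Finset.sum_Ico_consecutive (fun k => (Nat.choose n k : ℝ) * |(n : ℝ) - 2 * k|) (by omega : 0 ≤ m + 1) (by omega : m + 1 ≤ n + 1)
  -- second sum reindexed by k ↦ n - k
  have hre : ∑ k ∈ Finset.Ico (m + 1) (n + 1), (Nat.choose n k : ℝ) * |(n : ℝ) - 2 * k|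
      = ∑ k ∈ Finset.range (n - m), (Nat.choose n k : ℝ) * |(n : ℝ) - 2 * k| := by
    refine Finset.sum_nbij' (fun i => n - i) (fun i => n - i) ?_ ?_ ?_ ?_ ?_
    · intro a ha
      simp only [Finset.mem_Ico] at ha
      simp only [Finset.mem_range]
      omega
    · intro a ha
      simp only [Finset.mem_range] at ha
      simp only [Finset.mem_Ico]
      omega
    · intro a ha; simp only [Finset.mem_Ico] at ha; omega
    · intro a ha; simp only [Finset.mem_range] at ha; omega
    · intro a ha
      simp only [Finset.mem_Ico] at ha
      have hle : a ≤ n := by omega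
      rw [Nat.choose_symm hle]
      congr 1
      rw [Nat.cast_sub hle]
      rw [abs_sub_comm]
      congr 1
      ring
  -- on small ranges, drop the abs
  have habs1 : ∀ k ∈ Finset.range (m + 1),
      (Nat.choose n k : ℝ) * |(n : ℝ) - 2 * k| = (Nat.choose n k : ℝ) * ((n : ℝ) - 2 * k) := by
    intro k hk
    simp only [Finset.mem_range] at hk
    have : (0 : ℝ) ≤ (n : ℝ) - 2 * k := by
      have : 2 * k ≤ n := by omega
      have := Nat.cast_le (α := ℝ).mpr this
      push_cast at this ⊢; linarith
    rw [abs_of_nonneg this]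
  have habs2 : ∀ k ∈ Finset.range (n - m),
      (Nat.choose n k : ℝ) * |(n : ℝ) - 2 * k| = (Nat.choose n k : ℝ) * ((n : ℝ) - 2 * k) := by
    intro k hk
    simp only [Finset.mem_range] at hk
    have : (0 : ℝ) ≤ (n : ℝ) - 2 * k := by
      have : 2 * k ≤ n := by omega
      have := Nat.cast_le (α := ℝ).mpr this
      push_cast at this ⊢; linarith
    rw [abs_of_nonneg this]
  have hsum2 : ∑ k ∈ Finset.range (n - m), (Nat.choose n k : ℝ) * ((n : ℝ) - 2 * k)
      = ∑ k ∈ Finset.range (m + 1), (Nat.choose n k : ℝ) * ((n : ℝ) - 2 * k) := by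
    rcases Nat.even_or_odd n with he | ho
    · obtain ⟨t, ht⟩ := he
      have hnm : n - m = m := by omega
      have hn2m : n = 2 * m := by omega
      rw [hnm, Finset.sum_range_succ]
      have : (Nat.choose n m : ℝ) * ((n : ℝ) - 2 * m) = 0 := by
        have : (n : ℝ) = 2 * m := by exact_mod_cast congrArg Nat.cast hn2m
        rw [this]; ring
      rw [this, add_zero]
    · obtain ⟨t, ht⟩ := ho
      have hnm : n - m = m + 1 := by omega
      rw [hnm]
  have htel := tel n hn m (by omega)
  calc ∑ k ∈ Finset.range (n + 1), (Nat.choose n k : ℝ) * |(n : ℝ) - 2 * k|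
      = ∑ k ∈ Finset.range (m + 1), (Nat.choose n k : ℝ) * |(n : ℝ) - 2 * k|
        + ∑ k ∈ Finset.range (n - m), (Nat.choose n k : ℝ) * |(n : ℝ) - 2 * k| := by
        rw [← hsplit, hre]
    _ = ∑ k ∈ Finset.range (m + 1), (Nat.choose n k : ℝ) * ((n : ℝ) - 2 * k)
        + ∑ k ∈ Finset.range (n - m), (Nat.choose n k : ℝ) * ((n : ℝ) - 2 * k) := by
        rw [Finset.sum_congr rfl habs1, Finset.sum_congr rfl habs2]
    _ = 2 * ((n : ℝ) * (Nat.choose (n - 1) m : ℝ)) := by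
        rw [hsum2, htel]; ring

private lemma closed_form (n : ℕ) (hn : 0 < n) :
    countingLoss n = 2 ^ (-(n : ℝ)) * (Nat.choose (n - 1) (n / 2) : ℝ) := by
  have hn' : (0 : ℝ) < n := by exact_mod_cast hn
  unfold countingLoss
  have hterm : ∀ k ∈ Finset.range (n + 1),
      (Nat.choose n k : ℝ) * |(k : ℝ) / n - 1 / 2|
        = (Nat.choose n k : ℝ) * |(n : ℝ) - 2 * k| / (2 * n) := by
    intro k _
    have h1 : (k : ℝ) / n - 1 / 2 = -(((n : ℝ) - 2 * k) / (2 * n)) := by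
      field_simp; ring
    rw [h1, abs_neg, abs_div, abs_of_pos (by linarith : (0:ℝ) < 2 * n)]
    ring
  rw [Finset.sum_congr rfl hterm, ← Finset.sum_div, sum_abs n hn]
  field_simp

theorem counting_loss_even_step (i : ℕ) (hi : 0 < i) (heven : Even i) :
    countingLoss i = countingLoss (i + 1) := by
  obtain ⟨m, hm⟩ := heven
  have hmi : i = 2 * m := by omega
  have hm1 : 1 ≤ m := by omega
  rw [closed_form i hi, closed_form (i + 1) (by omega)]
  have hd1 : i / 2 = m := by omega
  have hd2 : (i + 1) / 2 = m := by omega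
  have hi1 : i + 1 - 1 = i := rfl
  rw [hd1, hd2, hi1]
  -- choose identity: C(i, m) = 2 * C(i-1, m)
  have key : Nat.choose ((i - 1) + 1) ((m - 1) + 1)
      = 2 * Nat.choose (i - 1) ((m - 1) + 1) := by
    rw [Nat.choose_succ_succ]
    have hsym : Nat.choose (i - 1) (m - 1) = Nat.choose (i - 1) ((m - 1) + 1) := by
      have h3 : (i - 1) - ((m - 1) + 1) = m - 1 := by omega
      rw [← Nat.choose_symm (n := i - 1) (k := (m - 1) + 1) (by omega), h3]
    simp only [Nat.succ_eq_add_one] at hsym ⊢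
    omega
  have hch : Nat.choose i m = 2 * Nat.choose (i - 1) m := by
    convert key using 3 <;> omega
  have hcast : (Nat.choose i m : ℝ) = 2 * (Nat.choose (i - 1) m : ℝ) := by
    exact_mod_cast congrArg Nat.cast hch
  rw [hcast]
  have hp : (2 : ℝ) ^ (-((i : ℝ) + 1)) * 2 = 2 ^ (-(i : ℝ)) := by
    rw [show -((i : ℝ) + 1) = -(i : ℝ) + (-1) by ring,
        Real.rpow_add (by norm_num), Real.rpow_neg_one]
    ring
  push_cast
  rw [show (-((i : ℝ) + 1)) = -((i : ℝ) + 1) from rfl]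
  nlinarith [hp]
end
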